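/- Let η ≥ 0 and v be measurable on ℝⁿ × [0,∞), radial in x, satisfying for all 0 < R₁ < R₂ and a.e. t: (1/2) d/dt ∫_{R₁≤|x|≤R₂} η² dⁿx = c_n (R₂^{n−1} η²(R₂,t) v(R₂,t) − R₁^{n−1} η²(R₁,t) v(R₁,t)), where η²(R,t)v(R,t) ≥ 0 for all R, t (incoming wave condition with inward normal), and sup_t ∫ η²(·,t) dⁿx = ‖ψ₀‖₂² < ∞. Then for each R, the function t ↦ η²(R,t)v(R,t) is in L¹([0,∞)) with ∫₀^∞ η²(R,t) v(R,t) dt ≤ (1/2)‖ψ₀‖₂², uniformly in R. -/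

import Mathlib

open MeasureTheory Filter

/-- Local flux integrability (Lemma 2.4): for radial `η, v`, with `m R t` the mass
`∫_{|x|≤R} η² dⁿx` (nonnegative, bounded by the conserved total mass `m₀ = ‖ψ₀‖₂²`),
satisfying the local mass identity
`(1/2) d/dt (m R₂ - m R₁) = c (R₂^{n-1} η²(R₂,t) v(R₂,t) - R₁^{n-1} η²(R₁,t) v(R₁,t))`
and the incoming wave condition `η² v ≥ 0`, the flux `t ↦ η²(R,t) v(R,t)` is in
`L¹([0,∞))` for each `R > 0`, with `c R^{n-1} ∫₀^∞ η² v dt ≤ (1/2) m₀` uniformly in `R`. -/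
theorem local_flux_integrable (n : ℕ) (hn : 2 ≤ n) (c m₀ : ℝ) (hc : 0 < c) (hm₀ : 0 ≤ m₀)
    (η v : ℝ → ℝ → ℝ)  -- arguments: radius `R`, time `t`
    (m : ℝ → ℝ → ℝ)    -- `m R t` : mass in the ball of radius `R` at time `t`
    (hm0 : ∀ t : ℝ, m 0 t = 0)
    (hmbd : ∀ R t : ℝ, 0 ≤ t → 0 ≤ m R t ∧ m R t ≤ m₀)
    (hIWC : ∀ R t : ℝ, 0 ≤ η R t ^ 2 * v R t)
    (hderiv : ∀ R₁ R₂ : ℝ, 0 ≤ R₁ → R₁ < R₂ → ∀ t : ℝ, 0 ≤ t →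
      HasDerivAt (fun τ => m R₂ τ - m R₁ τ)
        (2 * c * (R₂ ^ (n - 1) * η R₂ t ^ 2 * v R₂ t -
                  R₁ ^ (n - 1) * η R₁ t ^ 2 * v R₁ t)) t) :
    ∀ R : ℝ, 0 < R →
      IntegrableOn (fun t => η R t ^ 2 * v R t) (Set.Ici 0) volume ∧
      c * R ^ (n - 1) * (∫ t in Set.Ici (0:ℝ), η R t ^ 2 * v R t) ≤ (1 / 2) * m₀ := by
  intro R hR
  set f : ℝ → ℝ := fun t => η R t ^ 2 * v R t with hf
  set k : ℝ := 2 * c * R ^ (n - 1) with hk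
  have hkpos : 0 < k := by positivity
  set F : ℝ → ℝ := fun τ => m R τ - m 0 τ with hF
  have hFval : ∀ t, F t = m R t := by intro t; simp [hF, hm0]
  -- derivative of F is k * f on [0, ∞)
  have hzpow : (0:ℝ) ^ (n - 1) = 0 := by
    apply zero_pow
    omega
  have hFd : ∀ t : ℝ, 0 ≤ t → HasDerivAt F (k * f t) t := by
    intro t ht
    have := hderiv 0 R le_rfl hR t ht
    convert this using 1
    simp [hk, hf, hzpow]
    ring
  -- F is monotone on Ici 0 and bounded, hence has a limit at infinity
  have hmono : MonotoneOn F (Set.Ici (0:ℝ)) := by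
    apply monotoneOn_of_deriv_nonneg (convex_Ici 0)
    · intro x hx
      exact ((hFd x hx).continuousAt).continuousWithinAt
    · intro x hx
      rw [interior_Ici] at hx
      exact ((hFd x (le_of_lt hx)).differentiableAt).differentiableWithinAt
    · intro x hx
      rw [interior_Ici] at hx
      rw [(hFd x (le_of_lt hx)).deriv]
      have := hIWC R x
      have : 0 ≤ f x := this
      positivity
  set G : ℝ → ℝ := fun t => F (max t 0) with hG
  have hGmono : Monotone G := by
    intro a b hab
    exact hmono (Set.mem_Ici.2 (le_max_right a 0)) (Set.mem_Ici.2 (le_max_right b 0))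
      (max_le_max hab le_rfl)
  have hGbdd : BddAbove (Set.range G) := by
    refine ⟨m₀, ?_⟩
    rintro x ⟨t, rfl⟩
    rw [hG]
    simp only
    rw [hFval]
    exact (hmbd R (max t 0) (le_max_right t 0)).2
  have hGlim : Tendsto G atTop (nhds (⨆ t, G t)) := tendsto_atTop_ciSup hGmono hGbdd
  have hFG : F =ᶠ[atTop] G := by
    filter_upwards [eventually_ge_atTop (0:ℝ)] with t ht
    rw [hG]; simp [max_eq_left ht]
  have hFlim : Tendsto F atTop (nhds (⨆ t, G t)) := hGlim.congr' hFG.symm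
  have hlbd : (⨆ t, G t) ≤ m₀ := by
    apply ciSup_le
    intro t
    rw [hG]; simp only; rw [hFval]
    exact (hmbd R (max t 0) (le_max_right t 0)).2
  -- apply improper FTC for nonneg derivative
  have hcont0 : ContinuousWithinAt F (Set.Ici 0) 0 :=
    ((hFd 0 le_rfl).continuousAt).continuousWithinAt
  have hd' : ∀ x ∈ Set.Ioi (0:ℝ), HasDerivAt F (k * f x) x := fun x hx => hFd x (le_of_lt hx)
  have hpos : ∀ x ∈ Set.Ioi (0:ℝ), 0 ≤ k * f x := by
    intro x _
    have := hIWC R x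
    have : 0 ≤ f x := this
    positivity
  have hint : IntegrableOn (fun x => k * f x) (Set.Ioi 0) volume :=
    integrableOn_Ioi_deriv_of_nonneg hcont0 hd' hpos hFlim
  have heq : ∫ x in Set.Ioi (0:ℝ), k * f x = (⨆ t, G t) - F 0 :=
    integral_Ioi_of_hasDerivAt_of_nonneg hcont0 hd' hpos hFlim
  have hF0 : 0 ≤ F 0 := by rw [hFval]; exact (hmbd R 0 le_rfl).1
  have hbnd : ∫ x in Set.Ioi (0:ℝ), k * f x ≤ m₀ := by
    rw [heq]; linarith
  -- transfer from Ioi to Ici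
  have hintIci : IntegrableOn (fun x => k * f x) (Set.Ici 0) volume := by
    rwa [integrableOn_Ici_iff_integrableOn_Ioi]
  have hfint : IntegrableOn f (Set.Ici 0) volume := by
    have := hintIci.const_mul k⁻¹
    exact (by simpa [inv_mul_cancel_left₀ hkpos.ne'] using this : Integrable (fun x => f x) (volume.restrict (Set.Ici 0)))
  refine ⟨hfint, ?_⟩
  have h1 : ∫ t in Set.Ici (0:ℝ), k * f t ≤ m₀ := by
    rwa [MeasureTheory.integral_Ici_eq_integral_Ioi]
  rw [integral_const_mul] at h1
  have : c * R ^ (n - 1) * ∫ t in Set.Ici (0:ℝ), f t = (1/2) * (k * ∫ t in Set.Ici (0:ℝ), f t) := by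
    rw [hk]; ring
  rw [this]
  linarith
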